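/- arXiv:1607.02079 — 3 statements merged into one kernel-verified Lean document; each statement's English description precedes it below -/
import Mathlib

section
/- If G is a finitely generated fully residually free group (limit group) with rational rank rk_Q(G) = dim_Q(G^ab ⊗ Q) equal to 1, then G is isomorphic to the infinite cyclic group Z. -/
open scoped TensorProduct

/-- A group is fully residually free if every finite subset is mapped injectively
by some homomorphism to a free group. -/
def FullyResiduallyFree (G : Type*) [Group G] : Prop :=
  ∀ T : Finset G, ∃ (α : Type) (f : G →* FreeGroup α), Set.InjOn f T

/-- The rational rank `rk_Q(G) = dim_Q (G^ab ⊗_Z Q)`. -/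
noncomputable def rkQ (G : Type*) [Group G] : ℕ :=
  Module.finrank ℚ (ℚ ⊗[ℤ] Additive (Abelianization G))

/-- The minimal number of generators of a group. -/
noncomputable def d (G : Type*) [Group G] : ℕ :=
  sInf {n | ∃ S : Finset G, S.card = n ∧ Subgroup.closure (S : Set G) = ⊤}

/-! ### Auxiliary lemmas -/

/-- Distinct generators of a free group do not commute. -/
private lemma FreeGroup.not_commute_of {β : Type*} {x y : β} (h : x ≠ y) :
    ¬ Commute (FreeGroup.of x) (FreeGroup.of y) := by
  intro hc
  haveI := Classical.decEq β
  set σ : Equiv.Perm (Fin 3) := Equiv.swap 0 1 with hσ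
  set τ : Equiv.Perm (Fin 3) := Equiv.swap 1 2 with hτ
  set f : FreeGroup β →* Equiv.Perm (Fin 3) :=
    FreeGroup.lift (fun b => if b = x then σ else if b = y then τ else 1) with hf
  have h1 : f (FreeGroup.of x) = σ := by simp [hf]
  have h2 : f (FreeGroup.of y) = τ := by
    rw [hf, FreeGroup.lift_apply_of, if_neg (Ne.symm h), if_pos rfl]
  have hcc := hc.map f
  rw [h1, h2, hσ, hτ] at hcc
  have hne : ¬ ((Equiv.swap 0 1 : Equiv.Perm (Fin 3)) * Equiv.swap 1 2
      = Equiv.swap 1 2 * Equiv.swap 0 1) := by decide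
  exact hne hcc

/-- A free group over a subsingleton type is commutative. -/
private lemma FreeGroup.commute_of_subsingleton {β : Type*} [Subsingleton β]
    (u v : FreeGroup β) : Commute u v := by
  have base : ∀ (b : β) (v : FreeGroup β), Commute (FreeGroup.of b) v := by
    intro b v
    induction v with
    | C1 => exact Commute.one_right _
    | of c => exact (Subsingleton.elim b c) ▸ Commute.refl _
    | inv_of c hc => exact hc.inv_right
    | mul p q hp hq => exact hp.mul_right hq
  induction u with
  | C1 => exact Commute.one_left _
  | of c => exact base c v
  | inv_of c hc => exact hc.inv_left
  | mul p q hp hq => exact hp.mul_left hq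

private lemma unitLift_injective :
    Function.Injective (FreeGroup.lift (fun _ : Unit => Multiplicative.ofAdd (1 : ℤ))) := by
  refine (injective_iff_map_eq_one _).mpr ?_
  intro w hw
  have hrep : FreeGroup.of () ^ (FreeGroup.freeGroupUnitEquivInt w) = w :=
    FreeGroup.freeGroupUnitEquivInt.left_inv w
  set z := FreeGroup.freeGroupUnitEquivInt w with hz
  have : (FreeGroup.lift (fun _ : Unit => Multiplicative.ofAdd (1 : ℤ)))
      (FreeGroup.of () ^ z) = 1 := by rw [hrep]; exact hw
  rw [map_zpow, FreeGroup.lift_apply_of] at this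
  have hz0 : z = 0 := by
    have := congrArg Multiplicative.toAdd this
    simpa using this
  rw [← hrep, hz0, zpow_zero]

/-- Free groups are torsion-free: if `w ≠ 1` and `w ^ n = 1` then `n = 0`. -/
private lemma FreeGroup.zpow_eq_one {α : Type} {w : FreeGroup α} (hw : w ≠ 1)
    {n : ℤ} (hn : w ^ n = 1) : n = 0 := by
  set H := Subgroup.zpowers w with hH
  haveI : IsFreeGroup H := inferInstance
  set β := IsFreeGroup.Generators H with hβ
  set e : H ≃* FreeGroup β := IsFreeGroup.toFreeGroup (G := H) with he
  have hcomm : ∀ u v : H, Commute u v := by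
    intro u v
    obtain ⟨i, hi⟩ := Subgroup.mem_zpowers_iff.mp u.2
    obtain ⟨j, hj⟩ := Subgroup.mem_zpowers_iff.mp v.2
    have : (u : FreeGroup α) * v = (v : FreeGroup α) * u := by
      rw [← hi, ← hj, ← zpow_add, ← zpow_add, add_comm]
    exact Subtype.ext this
  have hsub : Subsingleton β := by
    by_contra hns
    rw [not_subsingleton_iff_nontrivial] at hns
    obtain ⟨x, y, hxy⟩ := hns.exists_pair_ne
    refine FreeGroup.not_commute_of hxy ?_
    have h0 := (hcomm (e.symm (FreeGroup.of x)) (e.symm (FreeGroup.of y))).map e.toMonoidHom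
    simpa using h0
  set g : H := ⟨w, Subgroup.mem_zpowers w⟩ with hg
  have hg1 : g ≠ 1 := fun h => hw (congrArg Subtype.val h)
  rcases isEmpty_or_nonempty β with hE | hN
  · exfalso
    apply hg1
    apply e.injective
    have : ∀ u : FreeGroup β, u = 1 := by
      intro u
      induction u with
      | C1 => rfl
      | of c => exact (hE.false c).elim
      | inv_of c hc => rw [hc]; simp
      | mul p q hp hq => rw [hp, hq, one_mul]
    rw [this (e g), this (e 1)]
  · obtain ⟨b₀⟩ := hN
    haveI : Unique β := uniqueOfSubsingleton b₀
    set e' : β ≃ Unit := Equiv.ofUnique β Unit with he'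
    set ψ : H →* Multiplicative ℤ :=
      ((FreeGroup.lift (fun _ : Unit => Multiplicative.ofAdd (1 : ℤ))).comp
        (FreeGroup.freeGroupCongr e').toMonoidHom).comp e.toMonoidHom with hψ
    have hψinj : Function.Injective ψ := by
      rw [hψ]
      simp only [MonoidHom.coe_comp, MulEquiv.coe_toMonoidHom]
      exact unitLift_injective.comp ((FreeGroup.freeGroupCongr e').injective.comp e.injective)
    have hψg : ψ g ≠ 1 := fun h => hg1 (hψinj (by rw [h, _root_.map_one]))
    have hgn : g ^ n = 1 := Subtype.ext hn
    have : (ψ g) ^ n = 1 := by rw [← _root_.map_zpow, hgn, _root_.map_one]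
    have h0 : n • (ψ g).toAdd = 0 := by
      have := congrArg Multiplicative.toAdd this
      simpa using this
    rcases smul_eq_zero.mp h0 with h | h
    · exact_mod_cast h
    · exact absurd (Multiplicative.toAdd.injective (by simp [h])) hψg

/-- If a group surjects onto `ℤ × ℤ`, its rational rank is not one. -/
private lemma rkQ_ne_one_of_surj {G : Type*} [Group G] (χ : G →* Multiplicative (ℤ × ℤ))
    (hχ : Function.Surjective χ) : rkQ G ≠ 1 := by
  intro h1
  set φ₀ : Abelianization G →* Multiplicative (ℤ × ℤ) := Abelianization.lift χ with hφ₀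
  have hφ₀s : Function.Surjective φ₀ := by
    intro z
    obtain ⟨g, hg⟩ := hχ z
    exact ⟨Abelianization.of g, by simpa [hφ₀] using hg⟩
  set φ : Additive (Abelianization G) →ₗ[ℤ] ℤ × ℤ :=
    ((AddEquiv.additiveMultiplicative (ℤ × ℤ)).toAddMonoidHom.comp
      (MonoidHom.toAdditive φ₀)).toIntLinearMap with hφ
  have hφs : Function.Surjective φ := by
    intro z
    obtain ⟨a, ha⟩ := hφ₀s (Multiplicative.ofAdd z)
    exact ⟨a, congrArg Multiplicative.toAdd ha⟩
  have hΦs : Function.Surjective (LinearMap.baseChange ℚ φ) := by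
    have : (LinearMap.baseChange ℚ φ : ℚ ⊗[ℤ] Additive (Abelianization G) → ℚ ⊗[ℤ] (ℤ × ℤ)) =
        LinearMap.lTensor ℚ φ := LinearMap.baseChange_eq_ltensor φ
    rw [this]
    exact LinearMap.lTensor_surjective ℚ hφs
  have hr2 : Module.rank ℚ (ℚ ⊗[ℤ] (ℤ × ℤ)) = 2 := by
    let B : Module.Basis (Unit ⊕ Unit) ℤ (ℤ × ℤ) := (Module.Basis.singleton Unit ℤ).prod (Module.Basis.singleton Unit ℤ)
    rw [rank_eq_card_basis (B.baseChange ℚ)]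
    simp
  have hr1 : Module.rank ℚ (ℚ ⊗[ℤ] Additive (Abelianization G)) = 1 :=
    Module.rank_eq_one_iff_finrank_eq_one.mpr h1
  have hle := LinearMap.lift_rank_le_of_surjective (LinearMap.baseChange ℚ φ) hΦs
  rw [hr1, hr2] at hle
  simp only [Cardinal.lift_ofNat, Cardinal.lift_one] at hle
  norm_num at hle

theorem limitGroup_rkQ_eq_one (G : Type*) [Group G] [Group.FG G]
    (hG : FullyResiduallyFree G) (h1 : rkQ G = 1) :
    Nonempty (G ≃* Multiplicative ℤ) := by
  classical
  -- Step 1 : G is commutative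
  have hcomm : ∀ a b : G, a * b = b * a := by
    by_contra hna
    push_neg at hna
    obtain ⟨a, b, hab⟩ := hna
    obtain ⟨α, f, hf⟩ := hG {a * b, b * a}
    have hfne : f a * f b ≠ f b * f a := by
      intro h
      apply hab
      refine hf ?_ ?_ (by rw [map_mul, map_mul, h])
      · simp
      · simp
    set H := f.range with hH
    haveI : IsFreeGroup H := inferInstance
    set β := IsFreeGroup.Generators H with hβ
    set e : H ≃* FreeGroup β := IsFreeGroup.toFreeGroup (G := H) with he
    have hnt : Nontrivial β := by
      rw [← not_subsingleton_iff_nontrivial]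
      intro hsub
      apply hfne
      set a' : H := ⟨f a, by exact ⟨a, rfl⟩⟩ with ha'
      set b' : H := ⟨f b, by exact ⟨b, rfl⟩⟩ with hb'
      have h0 := (FreeGroup.commute_of_subsingleton (e a') (e b')).map e.symm.toMonoidHom
      simp only [MulEquiv.coe_toMonoidHom, Commute, SemiconjBy] at h0
      rw [← map_mul, ← map_mul] at h0
      have h2 : a' * b' = b' * a' := by
        have := h0
        simp only [MulEquiv.symm_apply_apply] at this
        exact this
      exact congrArg Subtype.val h2
    obtain ⟨x, y, hxy⟩ := hnt.exists_pair_ne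
    set ψ : FreeGroup β →* Multiplicative (ℤ × ℤ) :=
      FreeGroup.lift (fun c => if c = x then Multiplicative.ofAdd ((1 : ℤ), (0 : ℤ))
        else if c = y then Multiplicative.ofAdd ((0 : ℤ), (1 : ℤ)) else 1) with hψ
    have hψx : ψ (FreeGroup.of x) = Multiplicative.ofAdd ((1 : ℤ), (0 : ℤ)) := by simp [hψ]
    have hψy : ψ (FreeGroup.of y) = Multiplicative.ofAdd ((0 : ℤ), (1 : ℤ)) := by
      rw [hψ, FreeGroup.lift_apply_of, if_neg (Ne.symm hxy), if_pos rfl]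
    have hψs : Function.Surjective ψ := by
      intro z
      refine ⟨FreeGroup.of x ^ (z.toAdd.1) * FreeGroup.of y ^ (z.toAdd.2), ?_⟩
      rw [map_mul, map_zpow, map_zpow, hψx, hψy]
      apply Multiplicative.toAdd.injective
      simp [Prod.ext_iff]
    set χ : G →* Multiplicative (ℤ × ℤ) := (ψ.comp e.toMonoidHom).comp f.rangeRestrict with hχ
    have hχs : Function.Surjective χ := by
      rw [hχ]
      simp only [MonoidHom.coe_comp, MulEquiv.coe_toMonoidHom]
      exact (hψs.comp e.surjective).comp f.rangeRestrict_surjective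
    exact rkQ_ne_one_of_surj χ hχs h1
  letI : CommGroup G := { ‹Group G› with mul_comm := hcomm }
  -- Step 2 : G is torsion-free, hence free abelian of rank 1
  set M := Additive G with hM
  haveI : Module.Finite ℤ M := Module.Finite.iff_addGroup_fg.mpr inferInstance
  haveI : NoZeroSMulDivisors ℤ M := by
    refine ⟨fun {c x} hcx => ?_⟩
    by_contra hcon
    push_neg at hcon
    obtain ⟨hc, hx⟩ := hcon
    set g : G := x.toMul with hgdef
    have hg1 : g ≠ 1 := fun h => hx h
    have hgc : g ^ c = 1 := hcx
    obtain ⟨α, f, hf⟩ := hG {1, g}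
    have hfg : f g ≠ 1 := by
      intro h
      apply hg1
      exact (hf (by simp) (by simp) (by rw [h, map_one])).symm
    have : (f g) ^ c = 1 := by rw [← map_zpow, hgc, map_one]
    exact hc (FreeGroup.zpow_eq_one hfg this)
  haveI : Module.Free ℤ M := Module.free_of_finite_type_torsion_free'
  -- Step 3 : identify the rank with rkQ via the abelianization
  have eAb : Abelianization G ≃* G := Abelianization.equivOfComm.symm
  have eAdd : Additive (Abelianization G) ≃+ M := MulEquiv.toAdditive eAb
  have eLin : (ℚ ⊗[ℤ] Additive (Abelianization G)) ≃ₗ[ℚ] (ℚ ⊗[ℤ] M) :=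
    LinearEquiv.baseChange ℤ ℚ _ _ eAdd.toIntLinearEquiv
  have hfr : Module.finrank ℚ (ℚ ⊗[ℤ] M) = 1 := by
    rw [← eLin.finrank_eq]; exact h1
  set b := Module.Free.chooseBasis ℤ M with hb
  set ι := Module.Free.ChooseBasisIndex ℤ M with hι
  have hcard : Fintype.card ι = 1 := by
    have := Module.finrank_eq_card_basis (b.baseChange ℚ)
    rw [hfr] at this
    exact this.symm
  haveI : Unique ι := Fintype.card_eq_one_iff_nonempty_unique.mp hcard |>.some
  have eM : M ≃+ ℤ := b.repr.toAddEquiv.trans AddEquiv.finsuppUnique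
  exact ⟨(MulEquiv.multiplicativeAdditive G).symm.trans (AddEquiv.toMultiplicative eM)⟩
end

section
/- If G is a limit group with d(G) = 2, then G is either a free group of rank 2 or a free abelian group of rank 2. -/
open scoped TensorProduct
open scoped commutatorElement

namespace LimitAux

variable {α : Type} [DecidableEq α]

private lemma reduced_no_cancel {L : List (α × Bool)}
    (h : FreeGroup.reduce L = L) {k : ℕ} {x : α} {b : Bool}
    (h1 : L[k]? = some (x, b)) (h2 : L[k+1]? = some (x, !b)) : False := by
  have hk2 : k + 1 < L.length := (List.getElem?_eq_some_iff.mp h2).1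
  have hk1 : k < L.length := lt_trans (Nat.lt_succ_self k) hk2
  have e1 : L[k] = (x, b) := by
    rcases List.getElem?_eq_some_iff.mp h1 with ⟨_, h⟩; exact h
  have e2 : L[k+1] = (x, !b) := by
    rcases List.getElem?_eq_some_iff.mp h2 with ⟨_, h⟩; exact h
  have hL : L = L.take k ++ (x,b) :: (x,!b) :: L.drop (k+2) := by
    conv_lhs => rw [← List.take_append_drop k L]
    congr 1
    rw [List.drop_eq_getElem_cons hk1, e1, List.drop_eq_getElem_cons hk2, e2]
  exact FreeGroup.reduce.not (by rw [h]; exact hL)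

theorem exists_perm_hom (w : FreeGroup α) (hw : w ≠ 1) :
    ∃ (n : ℕ) (q : FreeGroup α →* Equiv.Perm (Fin n)), q w ≠ 1 := by
  classical
  set L := w.toWord with hLdef
  have hred : FreeGroup.reduce L = L := w.reduce_toWord
  set n := L.length with hn
  have hnil : L ≠ [] := fun h => hw (FreeGroup.toWord_eq_nil_iff.mp h)
  have hn1 : 0 < n := List.length_pos_iff.mpr hnil
  -- exclusion lemmas
  have exclP : ∀ (a : α) (j : ℕ),
      (0 < j ∧ L[j-1]? = some (a, true)) → L[j]? = some (a, false) → False := by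
    rintro a j ⟨hj, h1⟩ h2
    have hj1 : j - 1 + 1 = j := by omega
    exact reduced_no_cancel hred h1 (by rw [hj1]; exact h2)
  have exclQ : ∀ (a : α) (t : ℕ),
      L[t]? = some (a, true) → (0 < t ∧ L[t-1]? = some (a, false)) → False := by
    rintro a t h1 ⟨ht, h2⟩
    have ht1 : t - 1 + 1 = t := by omega
    exact reduced_no_cancel hred h2 (by rw [ht1]; exact h1)
  -- the partial bijection
  let e : ∀ a : α, {j : Fin (n+1) // (0 < (j:ℕ) ∧ L[(j:ℕ)-1]? = some (a, true)) ∨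
        L[(j:ℕ)]? = some (a, false)} ≃
      {t : Fin (n+1) // L[(t:ℕ)]? = some (a, true) ∨
        (0 < (t:ℕ) ∧ L[(t:ℕ)-1]? = some (a, false))} := fun a =>
    { toFun := fun j =>
        if hc : 0 < (j.1:ℕ) ∧ L[(j.1:ℕ)-1]? = some (a, true) then
          ⟨⟨(j.1:ℕ)-1, by have := j.1.isLt; omega⟩, Or.inl hc.2⟩
        else
          have h2 : L[(j.1:ℕ)]? = some (a, false) := j.2.resolve_left hc
          ⟨⟨(j.1:ℕ)+1, by have := (List.getElem?_eq_some_iff.mp h2).1; omega⟩,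
            Or.inr ⟨Nat.succ_pos _, by simpa using h2⟩⟩
      invFun := fun t =>
        if hc : L[(t.1:ℕ)]? = some (a, true) then
          ⟨⟨(t.1:ℕ)+1, by have := (List.getElem?_eq_some_iff.mp hc).1; omega⟩,
            Or.inl ⟨Nat.succ_pos _, by simpa using hc⟩⟩
        else
          have h2 := t.2.resolve_left hc
          ⟨⟨(t.1:ℕ)-1, by have := t.1.isLt; omega⟩, Or.inr h2.2⟩
      left_inv := by
        rintro ⟨⟨jv, hjv⟩, hj⟩
        by_cases hc : 0 < jv ∧ L[jv-1]? = some (a, true)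
        · simp only [dif_pos hc]
          have hcc : L[(jv - 1 : ℕ)]? = some (a, true) := hc.2
          simp only [dif_pos hcc]
          apply Subtype.ext; apply Fin.ext; simp; omega
        · simp only [dif_neg hc]
          have h2 : L[jv]? = some (a, false) := hj.resolve_left hc
          have hcc : ¬ L[(jv + 1 : ℕ)]? = some (a, true) := by
            intro hbad
            exact reduced_no_cancel hred h2 (by simpa using hbad)
          simp only [dif_neg hcc]
          apply Subtype.ext; apply Fin.ext; simp
      right_inv := by
        rintro ⟨⟨tv, htv⟩, ht⟩
        by_cases hc : L[tv]? = some (a, true)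
        · simp only [dif_pos hc]
          have hcc : 0 < tv + 1 ∧ L[(tv + 1 : ℕ) - 1]? = some (a, true) :=
            ⟨Nat.succ_pos _, by simpa using hc⟩
          simp only [dif_pos hcc]
          apply Subtype.ext; apply Fin.ext; simp
        · simp only [dif_neg hc]
          have h2 : 0 < tv ∧ L[tv-1]? = some (a, false) := ht.resolve_left hc
          have hcc : ¬ (0 < (tv - 1 : ℕ) ∧ L[(tv - 1 : ℕ) - 1]? = some (a, true)) := by
            rintro ⟨hpos, hbad⟩
            refine reduced_no_cancel hred hbad ?_
            have : tv - 1 - 1 + 1 = tv - 1 := by omega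
            rw [this]; exact h2.2
          simp only [dif_neg hcc]
          apply Subtype.ext; apply Fin.ext; simp; omega }
  let σ : α → Equiv.Perm (Fin (n+1)) := fun a => (e a).extendSubtype
  -- key facts
  have fact1 : ∀ (k : ℕ) (a : α) (hklt : k < n), L[k]? = some (a, true) →
      σ a ⟨k+1, by omega⟩ = ⟨k, by omega⟩ := by
    intro k a hklt hk
    have hp : (0 < ((⟨k+1, by omega⟩ : Fin (n+1)):ℕ) ∧
        L[((⟨k+1, by omega⟩ : Fin (n+1)):ℕ)-1]? = some (a, true)) ∨
        L[((⟨k+1, by omega⟩ : Fin (n+1)):ℕ)]? = some (a, false) :=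
      Or.inl ⟨Nat.succ_pos _, by simpa using hk⟩
    rw [Equiv.extendSubtype_apply_of_mem (e a) _ hp]
    have hc : 0 < (k+1 : ℕ) ∧ L[(k+1 : ℕ)-1]? = some (a, true) :=
      ⟨Nat.succ_pos _, by simpa using hk⟩
    show ((e a) ⟨⟨k+1, by omega⟩, hp⟩).1 = _
    simp only [e, dif_pos hc]
    apply Fin.ext; simp
    split
    · rfl
    · rename_i h; exact (h ⟨by rw [Fin.lt_def]; simp, hk⟩).elim
  have fact2 : ∀ (k : ℕ) (a : α) (hklt : k < n), L[k]? = some (a, false) →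
      σ a ⟨k, by omega⟩ = ⟨k+1, by omega⟩ := by
    intro k a hklt hk
    have hp : (0 < ((⟨k, by omega⟩ : Fin (n+1)):ℕ) ∧
        L[((⟨k, by omega⟩ : Fin (n+1)):ℕ)-1]? = some (a, true)) ∨
        L[((⟨k, by omega⟩ : Fin (n+1)):ℕ)]? = some (a, false) := Or.inr (by simpa using hk)
    rw [Equiv.extendSubtype_apply_of_mem (e a) _ hp]
    have hc : ¬ (0 < (k : ℕ) ∧ L[(k : ℕ)-1]? = some (a, true)) := by
      rintro ⟨hpos, hbad⟩
      refine reduced_no_cancel hred hbad ?_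
      have : k - 1 + 1 = k := by omega
      rw [this]; exact hk
    show ((e a) ⟨⟨k, by omega⟩, hp⟩).1 = _
    simp only [e, dif_neg hc]
    apply Fin.ext; simp
    split
    · rename_i h; exact (hc ⟨by simpa [Fin.lt_def] using h.1, h.2⟩).elim
    · rfl
  let φ : FreeGroup α →* Equiv.Perm (Fin (n+1)) := FreeGroup.lift σ
  have key : ∀ (m k : ℕ) (_hkm : k + m = n),
      φ (FreeGroup.mk (L.drop k)) ⟨n, by omega⟩ = ⟨k, by omega⟩ := by
    intro m
    induction m with
    | zero =>
      intro k hk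
      have hk' : k = L.length := by omega
      subst hk'
      rw [List.drop_length]
      have h1 : FreeGroup.mk ([] : List (α × Bool)) = 1 := FreeGroup.one_eq_mk.symm
      rw [h1, map_one]
      simp only [Equiv.Perm.one_apply]
      exact Fin.ext hn
    | succ m ih =>
      intro k hk
      have hklt : k < L.length := by omega
      have hdrop : L.drop k = L[k] :: L.drop (k+1) := List.drop_eq_getElem_cons hklt
      rcases hLk : L[k] with ⟨a, b⟩
      have hk? : L[k]? = some (a, b) := List.getElem?_eq_some_iff.mpr ⟨hklt, hLk⟩
      rw [hdrop, hLk]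
      have hsplit : FreeGroup.mk ((a,b) :: L.drop (k+1)) =
          FreeGroup.mk [(a,b)] * FreeGroup.mk (L.drop (k+1)) := by
        rw [FreeGroup.mul_mk]; rfl
      rw [hsplit, map_mul, Equiv.Perm.mul_apply, ih (k+1) (by omega)]
      have hsingle : φ (FreeGroup.mk [(a,b)]) = cond b (σ a) (σ a)⁻¹ := by
        have : φ (FreeGroup.mk [(a,b)]) = FreeGroup.lift σ (FreeGroup.mk [(a,b)]) := rfl
        rw [this, FreeGroup.lift_mk]
        simp
      rw [hsingle]
      cases b with
      | true =>
        simpa using fact1 k a hklt hk?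
      | false =>
        simp only [cond]
        rw [Equiv.Perm.inv_def, Equiv.symm_apply_eq]
        exact (fact2 k a hklt hk?).symm
  refine ⟨n+1, φ, fun hφ => ?_⟩
  have h0 := key n 0 (by omega)
  rw [List.drop_zero] at h0
  have hLw : FreeGroup.mk L = w := FreeGroup.mk_toWord
  rw [hLw, hφ] at h0
  simp only [Equiv.Perm.one_apply] at h0
  rw [Fin.mk.injEq] at h0
  omega

lemma freeGroup_subsingleton {γ : Type*} [IsEmpty γ] : Subsingleton (FreeGroup γ) := by
  constructor
  intro u v
  rw [← FreeGroup.mk_toWord (x := u), ← FreeGroup.mk_toWord (x := v)]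
  have h : ∀ l : List (γ × Bool), l = [] := by
    intro l
    cases l with
    | nil => rfl
    | cons h t => exact (IsEmpty.false h.1).elim
  rw [h u.toWord, h v.toWord]

lemma freeGroup_comm_of_subsingleton {γ : Type*} [Subsingleton γ] (u v : FreeGroup γ) :
    Commute u v := by
  rcases isEmpty_or_nonempty γ with h | h
  · exact Subsingleton.elim (α := FreeGroup γ)
      (letI := freeGroup_subsingleton (γ := γ); u * v) (v * u)
  · obtain ⟨c⟩ := h
    have hr : Set.range (FreeGroup.of : γ → FreeGroup γ) = {FreeGroup.of c} := by
      ext z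
      constructor
      · rintro ⟨d, rfl⟩; simp [Subsingleton.elim d c]
      · rintro rfl; exact ⟨c, rfl⟩
    have htop : Subgroup.closure ({FreeGroup.of c} : Set (FreeGroup γ)) = ⊤ := by
      rw [← hr]; exact FreeGroup.closure_range_of γ
    have hu : u ∈ Subgroup.closure ({FreeGroup.of c} : Set (FreeGroup γ)) := by
      rw [htop]; trivial
    have hv : v ∈ Subgroup.closure ({FreeGroup.of c} : Set (FreeGroup γ)) := by
      rw [htop]; trivial
    obtain ⟨zu, hzu⟩ := Subgroup.mem_closure_singleton.mp hu
    obtain ⟨zv, hzv⟩ := Subgroup.mem_closure_singleton.mp hv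
    rw [← hzu, ← hzv]
    exact (Commute.refl (FreeGroup.of c)).zpow_zpow zu zv

theorem hopf_f2 (φ : FreeGroup (Fin 2) →* FreeGroup (Fin 2))
    (hs : Function.Surjective φ) : Function.Injective φ := by
  rw [injective_iff_map_eq_one]
  intro w hw1
  by_contra hw
  obtain ⟨m, q, hq⟩ := exists_perm_hom w hw
  haveI : Finite (FreeGroup (Fin 2) →* Equiv.Perm (Fin m)) := by
    apply Finite.of_injective
      (fun ψ => (fun i => ψ (FreeGroup.of i) : Fin 2 → Equiv.Perm (Fin m)))
    intro ψ1 ψ2 h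
    apply FreeGroup.ext_hom
    intro a; exact congrFun h a
  have hinj : Function.Injective
      (fun ψ : FreeGroup (Fin 2) →* Equiv.Perm (Fin m) => ψ.comp φ) := by
    intro ψ1 ψ2 h
    exact (MonoidHom.cancel_right hs).mp h
  obtain ⟨ψ, hψ⟩ := Finite.injective_iff_surjective.mp hinj q
  have : q w = 1 := by
    rw [← hψ]
    show ψ (φ w) = 1
    rw [hw1, map_one]
  exact hq this

theorem freeGroup_pow_ne_one {β : Type} (u : FreeGroup β) (hu : u ≠ 1) {m : ℕ} (hm : 0 < m) :
    u ^ m ≠ 1 := by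
  intro hum
  set H := Subgroup.zpowers u with hH
  haveI : IsFreeGroup H := inferInstance
  set u' : H := ⟨u, Subgroup.mem_zpowers u⟩ with hu'
  have hu'm : u' ^ m = 1 := by
    apply Subtype.ext
    push_cast
    exact hum
  rcases isEmpty_or_nonempty (IsFreeGroup.Generators H) with hγ | hγ
  · haveI := freeGroup_subsingleton (γ := IsFreeGroup.Generators H)
    haveI : Subsingleton H := (IsFreeGroup.toFreeGroup H).toEquiv.subsingleton
    have hu1 : u' = 1 := Subsingleton.elim _ _
    exact hu (congrArg Subtype.val hu1)
  · obtain ⟨c⟩ := hγ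
    let h : H →* Multiplicative ℤ :=
      IsFreeGroup.lift (fun _ => Multiplicative.ofAdd (1 : ℤ))
    have h1 : (h u') ^ m = 1 := by rw [← map_pow, hu'm, map_one]
    have h2 : h u' = 1 := by
      have hadd := congrArg Multiplicative.toAdd h1
      rw [toAdd_pow, toAdd_one] at hadd
      have : Multiplicative.toAdd (h u') = 0 := by
        rcases smul_eq_zero.mp hadd with hz | hz
        · omega
        · exact hz
      have := congrArg Multiplicative.ofAdd this
      simpa using this
    have hcmem : (IsFreeGroup.of c : H) ∈ Subgroup.zpowers u' := by
      have hmem : ((IsFreeGroup.of c : H) : FreeGroup β) ∈ H := (IsFreeGroup.of c : H).2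
      obtain ⟨z, hz⟩ := Subgroup.mem_zpowers_iff.mp hmem
      exact ⟨z, by apply Subtype.ext; push_cast; exact hz⟩
    obtain ⟨z, hz⟩ := Subgroup.mem_zpowers_iff.mp hcmem
    have : h (IsFreeGroup.of c) = 1 := by
      rw [← hz, map_zpow, h2, one_zpow]
    rw [IsFreeGroup.lift_of] at this
    have := congrArg Multiplicative.toAdd this
    simpa using this

theorem lift_injective_of_not_commute {β : Type} {x y : FreeGroup β}
    (hxy : ¬ Commute x y) (ψ : FreeGroup (Fin 2) →* FreeGroup β)
    (h0 : ψ (FreeGroup.of 0) = x) (h1 : ψ (FreeGroup.of 1) = y) :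
    Function.Injective ψ := by
  classical
  set H := ψ.range with hHdef
  haveI : IsFreeGroup H := inferInstance
  have hxH : x ∈ H := ⟨FreeGroup.of 0, h0⟩
  have hyH : y ∈ H := ⟨FreeGroup.of 1, h1⟩
  set x' : H := ⟨x, hxH⟩ with hx'
  set y' : H := ⟨y, hyH⟩ with hy'
  have hrr0 : ψ.rangeRestrict (FreeGroup.of 0) = x' := by
    apply Subtype.ext; simpa using h0
  have hrr1 : ψ.rangeRestrict (FreeGroup.of 1) = y' := by
    apply Subtype.ext; simpa using h1
  have hdet : ∀ {M : Type} [Group M] (f g : ↥H →* M), f x' = g x' → f y' = g y' → f = g := by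
    intro M _ f g hfx hfy
    have hcomp : f.comp ψ.rangeRestrict = g.comp ψ.rangeRestrict := by
      have key : ∀ i : Fin 2, f (ψ.rangeRestrict (FreeGroup.of i))
          = g (ψ.rangeRestrict (FreeGroup.of i)) := by
        intro i
        match i with
        | 0 => rw [hrr0, hfx]
        | 1 => rw [hrr1, hfy]
      apply FreeGroup.ext_hom
      intro i
      simpa using key i
    exact (MonoidHom.cancel_right ψ.rangeRestrict_surjective).mp hcomp
  set M := Multiplicative (ZMod 2) with hM
  have hinj2 : Function.Injective (fun f : ↥H →* M => (f x', f y')) := by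
    intro f g h
    exact hdet f g (congrArg Prod.fst h) (congrArg Prod.snd h)
  haveI : Finite (↥H →* M) := Finite.of_injective _ hinj2
  have hEquiv : (IsFreeGroup.Generators ↥H → M) ≃ (↥H →* M) := IsFreeGroup.lift
  haveI : Finite (IsFreeGroup.Generators ↥H → M) := Finite.of_equiv _ hEquiv.symm
  haveI : Finite (IsFreeGroup.Generators ↥H) := by
    apply Finite.of_injective (fun c : IsFreeGroup.Generators ↥H =>
      (fun d => if d = c then Multiplicative.ofAdd (1 : ZMod 2) else 1 : IsFreeGroup.Generators ↥H → M))
    intro c c' h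
    by_contra hne
    have h2 : (if c = c then Multiplicative.ofAdd (1 : ZMod 2) else 1)
        = (if c = c' then Multiplicative.ofAdd (1 : ZMod 2) else 1) := congrFun h c
    rw [if_pos rfl, if_neg (fun hh => hne hh)] at h2
    have := congrArg Multiplicative.toAdd h2
    simpa using this
  haveI : Fintype (IsFreeGroup.Generators ↥H) := Fintype.ofFinite _
  have hM2 : Fintype.card M = 2 := by
    unfold M
    rw [Fintype.card_multiplicative, ZMod.card]
  have hcard4 : Nat.card (↥H →* M) ≤ 4 := by
    have hle := Nat.card_le_card_of_injective _ hinj2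
    have : Nat.card (M × M) = 4 := by
      rw [Nat.card_eq_fintype_card, Fintype.card_prod, hM2]
    omega
  have hpow : (2 : ℕ) ^ Fintype.card (IsFreeGroup.Generators ↥H) ≤ 4 := by
    have e1 : Nat.card (IsFreeGroup.Generators ↥H → M) = Nat.card (↥H →* M) :=
      Nat.card_congr hEquiv
    have e2 : Nat.card (IsFreeGroup.Generators ↥H → M)
        = 2 ^ Fintype.card (IsFreeGroup.Generators ↥H) := by
      rw [Nat.card_eq_fintype_card, Fintype.card_fun, hM2]
    omega
  have hγ2 : Fintype.card (IsFreeGroup.Generators ↥H) ≤ 2 := by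
    by_contra hgt
    push_neg at hgt
    have : 2 ^ 3 ≤ 2 ^ Fintype.card (IsFreeGroup.Generators ↥H) :=
      Nat.pow_le_pow_right (by norm_num) (by omega)
    omega
  have hγge : 2 ≤ Fintype.card (IsFreeGroup.Generators ↥H) := by
    by_contra hlt
    push_neg at hlt
    haveI : Subsingleton (IsFreeGroup.Generators ↥H) :=
      Fintype.card_le_one_iff_subsingleton.mp (by omega)
    have hcomm : Commute x' y' := by
      have hc := freeGroup_comm_of_subsingleton
        ((IsFreeGroup.toFreeGroup ↥H) x') ((IsFreeGroup.toFreeGroup ↥H) y')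
      show x' * y' = y' * x'
      apply (IsFreeGroup.toFreeGroup ↥H).injective
      rw [map_mul, map_mul]
      exact hc
    exact hxy (congrArg Subtype.val hcomm)
  have hγcard : Fintype.card (IsFreeGroup.Generators ↥H) = 2 := le_antisymm hγ2 hγge
  let eγ : IsFreeGroup.Generators ↥H ≃ Fin 2 := Fintype.equivFinOfCardEq hγcard
  let θ2 : ↥H ≃* FreeGroup (Fin 2) :=
    (IsFreeGroup.toFreeGroup ↥H).trans (FreeGroup.freeGroupCongr eγ)
  have hsurj : Function.Surjective (θ2.toMonoidHom.comp ψ.rangeRestrict) :=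
    θ2.surjective.comp ψ.rangeRestrict_surjective
  have hinjc := hopf_f2 _ hsurj
  have hrrinj : Function.Injective ψ.rangeRestrict := by
    rw [MonoidHom.coe_comp] at hinjc
    exact hinjc.of_comp
  intro a b h
  apply hrrinj
  apply Subtype.ext
  simpa using h

end LimitAux

theorem limitGroup_d_eq_two (G : Type*) [Group G] [Group.FG G]
    (hG : FullyResiduallyFree G) (h2 : d G = 2) :
    Nonempty (G ≃* FreeGroup (Fin 2)) ∨ Nonempty (G ≃* Multiplicative (Fin 2 → ℤ)) := by
  classical
  set S2 := {n : ℕ | ∃ S : Finset G, S.card = n ∧ Subgroup.closure (S : Set G) = ⊤} with hS2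
  have hd : d G = sInf S2 := rfl
  have hne : S2.Nonempty := by
    by_contra hc
    rw [Set.not_nonempty_iff_eq_empty] at hc
    rw [hd, hc, Nat.sInf_empty] at h2
    norm_num at h2
  have hmem2 : 2 ∈ S2 := by rw [← h2, hd]; exact Nat.sInf_mem hne
  have hge : ∀ m ∈ S2, 2 ≤ m := by
    intro m hm
    have := Nat.sInf_le hm
    rw [← hd, h2] at this
    exact this
  obtain ⟨S, hScard, hSclos⟩ := hmem2
  obtain ⟨a, b, hab, rfl⟩ := Finset.card_eq_two.mp hScard
  have hclos : Subgroup.closure ({a, b} : Set G) = ⊤ := by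
    rw [← hSclos]
    congr 1
    simp
  by_cases hab' : Commute a b
  · -- abelian case
    right
    have hAll : ∀ g : G, a * g = g * a ∧ b * g = g * b := by
      intro g
      have hg : g ∈ Subgroup.centralizer ({a, b} : Set G) := by
        have hle : Subgroup.closure ({a, b} : Set G) ≤
            Subgroup.centralizer ({a, b} : Set G) := by
          rw [Subgroup.closure_le]
          intro z hz
          rw [SetLike.mem_coe, Subgroup.mem_centralizer_iff]
          intro w hw
          simp only [Set.mem_insert_iff, Set.mem_singleton_iff] at hz hw
          rcases hz with rfl | rfl <;> rcases hw with rfl | rfl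
          · rfl
          · exact hab'.symm
          · exact hab'
          · rfl
        exact hle (hclos ▸ Subgroup.mem_top g)
      rw [Subgroup.mem_centralizer_iff] at hg
      exact ⟨hg a (by simp), hg b (by simp)⟩
    have hcomm : ∀ g h : G, g * h = h * g := by
      intro g h
      have hle : Subgroup.closure ({a, b} : Set G) ≤
          Subgroup.centralizer ({g} : Set G) := by
        rw [Subgroup.closure_le]
        intro z hz
        rw [SetLike.mem_coe, Subgroup.mem_centralizer_iff]
        intro w hw
        simp only [Set.mem_singleton_iff] at hw
        subst hw
        simp only [Set.mem_insert_iff, Set.mem_singleton_iff] at hz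
        rcases hz with rfl | rfl
        · exact (hAll w).1.symm
        · exact (hAll w).2.symm
      have hh := hle (hclos ▸ Subgroup.mem_top h)
      rw [Subgroup.mem_centralizer_iff] at hh
      exact hh g (by simp)
    letI : CommGroup G := { (inferInstance : Group G) with mul_comm := hcomm }
    have htf : ∀ (g : G), g ≠ 1 → ∀ m : ℕ, 0 < m → g ^ m ≠ 1 := by
      intro g hg m hm hgm
      obtain ⟨β, f, hf⟩ := hG {1, g}
      have hfg : f g ≠ 1 := by
        intro hc
        apply hg
        exact hf (by simp) (by simp) (by rw [map_one]; exact hc)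
      exact LimitAux.freeGroup_pow_ne_one (f g) hfg hm
        (by rw [← map_pow, hgm, map_one])
    haveI : NoZeroSMulDivisors ℤ (Additive G) := by
      constructor
      intro z x hzx
      by_contra hc
      push_neg at hc
      obtain ⟨hz0, hx0⟩ := hc
      have hg : Additive.toMul x ≠ 1 := fun hc1 => hx0 hc1
      have hna : 0 < z.natAbs := Int.natAbs_pos.mpr hz0
      apply htf (Additive.toMul x) hg z.natAbs hna
      have hzpow : Additive.toMul x ^ z = 1 := by
        have := congrArg Additive.toMul hzx
        simpa using this
      rcases Int.natAbs_eq z with hz | hz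
      · rw [← zpow_natCast, ← hz]
        exact hzpow
      · have h3 : Additive.toMul x ^ (-(z.natAbs : ℤ)) = 1 := by rw [← hz]; exact hzpow
        rw [zpow_neg, inv_eq_one, zpow_natCast] at h3
        exact h3
    haveI : Module.Finite ℤ (Additive G) := Module.Finite.iff_addGroup_fg.mpr inferInstance
    haveI : Module.Free ℤ (Additive G) := Module.free_of_finite_type_torsion_free'
    obtain ⟨n, ⟨e⟩⟩ : ∃ n : ℕ, Nonempty (G ≃* Multiplicative (Fin n → ℤ)) := by
      refine ⟨Module.finrank ℤ (Additive G), ⟨?_⟩⟩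
      let bA := Module.finBasis ℤ (Additive G)
      exact (MulEquiv.multiplicativeAdditive G).symm.trans
        (AddEquiv.toMultiplicative bA.equivFun.toAddEquiv)
    have hnge : 2 ≤ n := by
      by_contra hlt
      push_neg at hlt
      interval_cases n
      · haveI hsub : Subsingleton G := e.toEquiv.subsingleton
        have h0mem : (0 : ℕ) ∈ S2 := by
          refine ⟨∅, by simp, ?_⟩
          rw [eq_top_iff]
          intro x _
          have hx1 : x = 1 := Subsingleton.elim x 1
          rw [hx1]
          exact Subgroup.one_mem _
        have := hge 0 h0mem
        omega
      · have h1mem : (1 : ℕ) ∈ S2 := by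
          refine ⟨{e.symm (Multiplicative.ofAdd (fun _ => (1 : ℤ)))}, by simp, ?_⟩
          rw [Finset.coe_singleton, eq_top_iff]
          intro x _
          rw [Subgroup.mem_closure_singleton]
          refine ⟨Multiplicative.toAdd (e x) 0, ?_⟩
          rw [← map_zpow]
          have h2' : (Multiplicative.ofAdd (fun _ => (1 : ℤ))) ^ (Multiplicative.toAdd (e x) 0)
              = e x := by
            apply Multiplicative.toAdd.injective
            funext i
            have hi : i = 0 := Subsingleton.elim i 0
            subst hi
            simp
          rw [h2', e.symm_apply_apply]
        have := hge 1 h1mem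
        omega
    have hnle : n ≤ 2 := by
      have key : ∀ x' : G, x' ∈ Subgroup.closure ({a, b} : Set G) →
          Multiplicative.toAdd (e x') ∈ AddSubgroup.closure
            ({Multiplicative.toAdd (e a), Multiplicative.toAdd (e b)} : Set (Fin n → ℤ)) := by
        intro x' hx'
        induction hx' using Subgroup.closure_induction with
        | mem z hz =>
          simp only [Set.mem_insert_iff, Set.mem_singleton_iff] at hz
          rcases hz with rfl | rfl
          · exact AddSubgroup.subset_closure (by simp)
          · exact AddSubgroup.subset_closure (by simp)
        | one => simpa using AddSubgroup.zero_mem _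
        | mul u v hu hv ihu ihv =>
          have : Multiplicative.toAdd (e (u * v))
              = Multiplicative.toAdd (e u) + Multiplicative.toAdd (e v) := by
            rw [map_mul]; rfl
          rw [this]
          exact AddSubgroup.add_mem _ ihu ihv
        | inv u hu ihu =>
          have : Multiplicative.toAdd (e u⁻¹) = - Multiplicative.toAdd (e u) := by
            rw [map_inv]; rfl
          rw [this]
          exact AddSubgroup.neg_mem _ ihu
      have hVgen : AddSubgroup.closure
          ({Multiplicative.toAdd (e a), Multiplicative.toAdd (e b)} : Set (Fin n → ℤ)) = ⊤ := by
        rw [eq_top_iff]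
        intro w _
        have hx : e.symm (Multiplicative.ofAdd w) ∈ Subgroup.closure ({a, b} : Set G) := by
          rw [hclos]; trivial
        have hk := key _ hx
        simpa using hk
      have hspan : Submodule.span ℤ
          ({Multiplicative.toAdd (e a), Multiplicative.toAdd (e b)} : Set (Fin n → ℤ)) = ⊤ := by
        rw [eq_top_iff]
        intro w _
        have hw : w ∈ AddSubgroup.closure
            ({Multiplicative.toAdd (e a), Multiplicative.toAdd (e b)} : Set (Fin n → ℤ)) := by
          rw [hVgen]; trivial
        have hle : AddSubgroup.closure
            ({Multiplicative.toAdd (e a), Multiplicative.toAdd (e b)} : Set (Fin n → ℤ))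
            ≤ (Submodule.span ℤ
              ({Multiplicative.toAdd (e a), Multiplicative.toAdd (e b)} : Set (Fin n → ℤ))).toAddSubgroup := by
          rw [AddSubgroup.closure_le]
          exact Submodule.subset_span
        exact hle hw
      have h1 := finrank_span_le_card (R := ℤ)
        ({Multiplicative.toAdd (e a), Multiplicative.toAdd (e b)} : Set (Fin n → ℤ))
      rw [hspan, finrank_top] at h1
      have h4 : Module.finrank ℤ (Fin n → ℤ) = n := by
        rw [Module.finrank_pi, Fintype.card_fin]
      rw [h4] at h1
      refine le_trans h1 ?_
      rw [Set.toFinset_insert, Set.toFinset_singleton]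
      exact le_trans (Finset.card_insert_le _ _) (by simp)
    have hn : n = 2 := le_antisymm hnle hnge
    subst hn
    exact ⟨e⟩
  · -- nonabelian case
    left
    have hcomm1 : ⁅a, b⁆ ≠ 1 := fun hc => hab' (commutatorElement_eq_one_iff_commute.mp hc)
    obtain ⟨β, f, hf⟩ := hG {1, a * b * a⁻¹ * b⁻¹}
    have hfc : f ⁅a, b⁆ ≠ 1 := by
      intro hc
      apply hcomm1
      have h1 : f (a * b * a⁻¹ * b⁻¹) = f 1 := by rw [map_one]; exact hc
      exact hf (by simp [commutatorElement_def]) (by simp) h1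
    have hnc : ¬ Commute (f a) (f b) := by
      intro hc
      apply hfc
      rw [map_commutatorElement]
      exact commutatorElement_eq_one_iff_commute.mpr hc
    let gfun : Fin 2 → G := fun i => if i = 0 then a else b
    let π : FreeGroup (Fin 2) →* G := FreeGroup.lift gfun
    have hπs : Function.Surjective π := by
      rw [← MonoidHom.range_eq_top]
      have hr : π.range = Subgroup.closure (Set.range gfun) := FreeGroup.range_lift_eq_closure
      have hrange : Set.range gfun = {a, b} := by
        ext z
        constructor
        · rintro ⟨i, rfl⟩
          by_cases hi : i = 0 <;> simp [gfun, hi]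
        · intro hz
          simp only [Set.mem_insert_iff, Set.mem_singleton_iff] at hz
          rcases hz with rfl | rfl
          · exact ⟨0, by simp [gfun]⟩
          · exact ⟨1, by simp [gfun]⟩
      rw [hr, hrange, hclos]
    have hψinj : Function.Injective (f.comp π) := by
      apply LimitAux.lift_injective_of_not_commute hnc
      · show f (π (FreeGroup.of 0)) = f a
        have : π (FreeGroup.of 0) = a := by
          simp [π, FreeGroup.lift_apply_of, gfun]
        rw [this]
      · show f (π (FreeGroup.of 1)) = f b
        have : π (FreeGroup.of 1) = b := by
          simp [π, FreeGroup.lift_apply_of, gfun]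
        rw [this]
    have hπinj : Function.Injective π := by
      intro u v h
      exact hψinj (by simp only [MonoidHom.comp_apply, h])
    exact ⟨(MulEquiv.ofBijective π ⟨hπinj, hπs⟩).symm⟩
end

section
/- Let F₂ = F(a,b) be the free group of rank 2, w = a²ba⁻¹b⁻¹ ∈ F₂, and let G = F₂ ∗_{⟨w⟩=⟨w⟩} F₂ be the double of F₂ along the cyclic subgroup generated by w. Then G^ab ≅ Z³, so d(G^ab) = 3, while d(G) = 4. -/
open scoped TensorProduct

/-- The amalgamated free product `G₁ ∗_H G₂` along `f₁ : H →* G₁`, `f₂ : H →* G₂`. -/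
def AmalgamatedProduct {G₁ G₂ H : Type*} [Group G₁] [Group G₂] [Group H]
    (f₁ : H →* G₁) (f₂ : H →* G₂) : Type _ :=
  Monoid.Coprod G₁ G₂ ⧸ Subgroup.normalClosure
    (Set.range fun h => Monoid.Coprod.inl (f₁ h) * (Monoid.Coprod.inr (f₂ h))⁻¹)

instance {G₁ G₂ H : Type*} [Group G₁] [Group G₂] [Group H]
    (f₁ : H →* G₁) (f₂ : H →* G₂) : Group (AmalgamatedProduct f₁ f₂) :=
  QuotientGroup.Quotient.group _

/-- The canonical map `G₁ →* G₁ ∗_H G₂`. -/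
def AmalgamatedProduct.inl {G₁ G₂ H : Type*} [Group G₁] [Group G₂] [Group H]
    (f₁ : H →* G₁) (f₂ : H →* G₂) : G₁ →* AmalgamatedProduct f₁ f₂ :=
  (QuotientGroup.mk' _).comp Monoid.Coprod.inl

/-- The canonical map `G₂ →* G₁ ∗_H G₂`. -/
def AmalgamatedProduct.inr {G₁ G₂ H : Type*} [Group G₁] [Group G₂] [Group H]
    (f₁ : H →* G₁) (f₂ : H →* G₂) : G₂ →* AmalgamatedProduct f₁ f₂ :=
  (QuotientGroup.mk' _).comp Monoid.Coprod.inr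

namespace AmalgamatedProduct
variable {G₁ G₂ H P : Type*} [Group G₁] [Group G₂] [Group H] [Group P]
  (f₁ : H →* G₁) (f₂ : H →* G₂)

def lift (k₁ : G₁ →* P) (k₂ : G₂ →* P) (hk : ∀ h, k₁ (f₁ h) = k₂ (f₂ h)) :
    AmalgamatedProduct f₁ f₂ →* P :=
  QuotientGroup.lift _ (Monoid.Coprod.lift k₁ k₂) (by
    intro x hx
    refine Subgroup.normalClosure_le_normal ?_ hx
    rintro y ⟨h, rfl⟩
    simp [MonoidHom.mem_ker, hk])

@[simp] theorem lift_inl (k₁ : G₁ →* P) (k₂ : G₂ →* P) (hk) (g : G₁) :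
    lift f₁ f₂ k₁ k₂ hk (inl f₁ f₂ g) = k₁ g := by
  show Monoid.Coprod.lift k₁ k₂ (Monoid.Coprod.inl g) = k₁ g
  simp

@[simp] theorem lift_inr (k₁ : G₁ →* P) (k₂ : G₂ →* P) (hk) (g : G₂) :
    lift f₁ f₂ k₁ k₂ hk (inr f₁ f₂ g) = k₂ g := by
  show Monoid.Coprod.lift k₁ k₂ (Monoid.Coprod.inr g) = k₂ g
  simp

theorem inl_comm (h : H) : inl f₁ f₂ (f₁ h) = inr f₁ f₂ (f₂ h) := by
  show QuotientGroup.mk _ = QuotientGroup.mk _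
  rw [QuotientGroup.eq]
  have hm : Monoid.Coprod.inl (f₁ h) * (Monoid.Coprod.inr (f₂ h))⁻¹ ∈
      Subgroup.normalClosure (Set.range fun h =>
        Monoid.Coprod.inl (f₁ h) * (Monoid.Coprod.inr (f₂ h))⁻¹) :=
    Subgroup.subset_normalClosure ⟨h, rfl⟩
  have h2 := (Subgroup.normalClosure_normal).conj_mem' _ (inv_mem hm)
    (Monoid.Coprod.inl (f₁ h))
  simpa [mul_assoc] using h2

theorem closure_eq_top' {S : Set (AmalgamatedProduct f₁ f₂)}
    (h1 : Set.range (inl f₁ f₂) ⊆ Subgroup.closure S)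
    (h2 : Set.range (inr f₁ f₂) ⊆ Subgroup.closure S) :
    Subgroup.closure S = ⊤ := by
  rw [Subgroup.eq_top_iff']
  intro x
  obtain ⟨y, rfl⟩ := QuotientGroup.mk_surjective x
  refine Monoid.Coprod.induction_on y (fun m => h1 ⟨m, rfl⟩) (fun n => h2 ⟨n, rfl⟩)
    (fun a b ha hb => ?_)
  exact mul_mem ha hb

end AmalgamatedProduct

/-- If `S` generates `G`, any family of distinct homs `G →* Q` has size at most `|Q|^|S|`. -/
theorem card_le_of_gen {G Q : Type*} [Group G] [Group Q] [Fintype Q] [DecidableEq Q]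
    {S : Finset G} (hS : Subgroup.closure (S : Set G) = ⊤)
    {X : Type*} [Fintype X] (F : X → (G →* Q)) (hF : Function.Injective F) :
    Fintype.card X ≤ Fintype.card Q ^ S.card := by
  classical
  have hr : Function.Injective (fun x (s : {a // a ∈ S}) => F x s.1) := by
    intro x y hxy
    apply hF
    apply MonoidHom.eq_of_eqOn_dense hS
    intro g hg
    exact congrFun hxy ⟨g, hg⟩
  calc Fintype.card X ≤ Fintype.card ({a // a ∈ S} → Q) := Fintype.card_le_of_injective _ hr
    _ = Fintype.card Q ^ S.card := by rw [Fintype.card_fun, Fintype.card_coe]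

theorem gen_transfer {A : Type*} {B : Type*} [Group A] [Group B] (e : A ≃* B) (n : ℕ)
    (h : ∃ S : Finset A, S.card = n ∧ Subgroup.closure (S : Set A) = ⊤) :
    ∃ S : Finset B, S.card = n ∧ Subgroup.closure (S : Set B) = ⊤ := by
  classical
  obtain ⟨S, hcard, hcl⟩ := h
  refine ⟨S.image e, by rw [Finset.card_image_of_injective _ e.injective, hcard], ?_⟩
  have h1 : (↑(S.image e) : Set B) = ⇑e.toMonoidHom '' S := by simp [Finset.coe_image]
  rw [h1, ← MonoidHom.map_closure, hcl]
  simpa using Subgroup.map_top_of_surjective e.toMonoidHom e.surjective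

theorem d_congr {A B : Type*} [Group A] [Group B] (e : A ≃* B) : d A = d B := by
  unfold d
  congr 1
  ext n
  exact ⟨gen_transfer e n, gen_transfer e.symm n⟩

section Zthree
open Multiplicative

def eB (i : Fin 3) : Multiplicative (Fin 3 → ℤ) := ofAdd (Pi.single i 1)

theorem closure_eB : Subgroup.closure (Set.range eB) = ⊤ := by
  rw [Subgroup.eq_top_iff']
  intro x
  have hx : x = eB 0 ^ (toAdd x 0) * eB 1 ^ (toAdd x 1) * eB 2 ^ (toAdd x 2) := by
    apply Multiplicative.toAdd.injective
    funext j
    fin_cases j <;>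
      simp [eB, Pi.single_apply, ← ofAdd_zsmul]
  rw [hx]
  exact mul_mem (mul_mem (zpow_mem (Subgroup.subset_closure (Set.mem_range_self 0)) _)
    (zpow_mem (Subgroup.subset_closure (Set.mem_range_self 1)) _))
    (zpow_mem (Subgroup.subset_closure (Set.mem_range_self 2)) _)

end Zthree

section Zthree2
open Multiplicative

def eFinset : Finset (Multiplicative (Fin 3 → ℤ)) := {eB 0, eB 1, eB 2}

theorem closure_eFinset : Subgroup.closure (eFinset : Set (Multiplicative (Fin 3 → ℤ))) = ⊤ := by
  have h : Set.range eB ⊆ (eFinset : Set (Multiplicative (Fin 3 → ℤ))) := by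
    rintro x ⟨i, rfl⟩
    fin_cases i <;> simp [eFinset]
  rw [eq_top_iff, ← closure_eB]
  exact Subgroup.closure_mono h

def belowHom (v : Fin 3 → ZMod 2) :
    Multiplicative (Fin 3 → ℤ) →* Multiplicative (ZMod 2) :=
  AddMonoidHom.toMultiplicative (∑ i : Fin 3,
    (AddMonoidHom.mulLeft (v i)).comp ((Int.castAddHom (ZMod 2)).comp
      (Pi.evalAddMonoidHom (fun _ => ℤ) i)))

theorem belowHom_eB (v : Fin 3 → ZMod 2) (i : Fin 3) :
    belowHom v (eB i) = ofAdd (v i) := by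
  have : (∑ j : Fin 3, v j * ((Pi.single i 1 : Fin 3 → ℤ) j : ZMod 2)) = v i := by
    fin_cases i <;> simp [Fin.sum_univ_three, Pi.single_apply]
  simp [belowHom, eB, AddMonoidHom.finset_sum_apply, this]

theorem belowHom_inj : Function.Injective belowHom := by
  intro v v' h
  funext i
  have := congrArg (fun f => f (eB i)) h
  simpa [belowHom_eB] using this

theorem d_M3 : d (Multiplicative (Fin 3 → ℤ)) = 3 := by
  have mem3 : 3 ∈ {n | ∃ S : Finset (Multiplicative (Fin 3 → ℤ)),
      S.card = n ∧ Subgroup.closure (S : Set (Multiplicative (Fin 3 → ℤ))) = ⊤} :=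
    ⟨eFinset, by decide, closure_eFinset⟩
  refine le_antisymm (Nat.sInf_le mem3) (le_csInf ⟨3, mem3⟩ ?_)
  rintro n ⟨S, rfl, hcl⟩
  by_contra hlt
  push_neg at hlt
  have h8 : Fintype.card (Fin 3 → ZMod 2) ≤
      Fintype.card (Multiplicative (ZMod 2)) ^ S.card :=
    card_le_of_gen hcl belowHom belowHom_inj
  have hc1 : Fintype.card (Fin 3 → ZMod 2) = 8 := by decide
  have hc2 : Fintype.card (Multiplicative (ZMod 2)) = 2 := by decide
  rw [hc1, hc2] at h8
  have : (2:ℕ) ^ S.card ≤ 2 ^ 2 := Nat.pow_le_pow_right (by norm_num) (by omega)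
  omega

end Zthree2

section Main

abbrev Gam (w : FreeGroup (Fin 2)) :=
  AmalgamatedProduct (zpowersHom (FreeGroup (Fin 2)) w) (zpowersHom (FreeGroup (Fin 2)) w)

def A1 (w : FreeGroup (Fin 2)) : Gam w :=
  AmalgamatedProduct.inl _ _ (FreeGroup.of 0)
def B1 (w : FreeGroup (Fin 2)) : Gam w :=
  AmalgamatedProduct.inl _ _ (FreeGroup.of 1)
def A2 (w : FreeGroup (Fin 2)) : Gam w :=
  AmalgamatedProduct.inr _ _ (FreeGroup.of 0)
def B2 (w : FreeGroup (Fin 2)) : Gam w :=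
  AmalgamatedProduct.inr _ _ (FreeGroup.of 1)

theorem liftW {P : Type*} [Group P] {w : FreeGroup (Fin 2)}
    (hw : w = FreeGroup.of 0 * FreeGroup.of 0 * FreeGroup.of 1 *
      (FreeGroup.of 0)⁻¹ * (FreeGroup.of 1)⁻¹) (a b : P) :
    FreeGroup.lift ![a, b] w = a * a * b * a⁻¹ * b⁻¹ := by
  subst hw; simp

def pairHom {P : Type*} [Group P] (w : FreeGroup (Fin 2)) (a b c d : P)
    (h : FreeGroup.lift ![a, b] w = FreeGroup.lift ![c, d] w) : Gam w →* P :=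
  AmalgamatedProduct.lift _ _ (FreeGroup.lift ![a, b]) (FreeGroup.lift ![c, d])
    (fun n => by simp [map_zpow, h])

@[simp] theorem pairHom_A1 {P : Type*} [Group P] (w : FreeGroup (Fin 2)) (a b c d : P) (h) :
    pairHom w a b c d h (A1 w) = a := by simp [pairHom, A1]
@[simp] theorem pairHom_B1 {P : Type*} [Group P] (w : FreeGroup (Fin 2)) (a b c d : P) (h) :
    pairHom w a b c d h (B1 w) = b := by simp [pairHom, B1]
@[simp] theorem pairHom_A2 {P : Type*} [Group P] (w : FreeGroup (Fin 2)) (a b c d : P) (h) :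
    pairHom w a b c d h (A2 w) = c := by simp [pairHom, A2]
@[simp] theorem pairHom_B2 {P : Type*} [Group P] (w : FreeGroup (Fin 2)) (a b c d : P) (h) :
    pairHom w a b c d h (B2 w) = d := by simp [pairHom, B2]

theorem closure_four (w : FreeGroup (Fin 2)) :
    Subgroup.closure {A1 w, B1 w, A2 w, B2 w} = ⊤ := by
  apply AmalgamatedProduct.closure_eq_top'
  · rintro _ ⟨g, rfl⟩
    have h : (⊤ : Subgroup (FreeGroup (Fin 2))) ≤
        Subgroup.comap (AmalgamatedProduct.inl (zpowersHom _ w) (zpowersHom _ w))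
          (Subgroup.closure {A1 w, B1 w, A2 w, B2 w}) := by
      rw [← FreeGroup.closure_range_of, Subgroup.closure_le]
      rintro _ ⟨i, rfl⟩
      fin_cases i
      · exact Subgroup.subset_closure (by left; rfl)
      · exact Subgroup.subset_closure (by right; left; rfl)
    exact h (Subgroup.mem_top g)
  · rintro _ ⟨g, rfl⟩
    have h : (⊤ : Subgroup (FreeGroup (Fin 2))) ≤
        Subgroup.comap (AmalgamatedProduct.inr (zpowersHom _ w) (zpowersHom _ w))
          (Subgroup.closure {A1 w, B1 w, A2 w, B2 w}) := by
      rw [← FreeGroup.closure_range_of, Subgroup.closure_le]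
      rintro _ ⟨i, rfl⟩
      fin_cases i
      · exact Subgroup.subset_closure (by right; right; left; rfl)
      · exact Subgroup.subset_closure (by right; right; right; rfl)
    exact h (Subgroup.mem_top g)

end Main

section DGam
open DihedralGroup

def Wd (a b : DihedralGroup 3) : DihedralGroup 3 := a * a * b * a⁻¹ * b⁻¹

def Xt := {t : DihedralGroup 3 × DihedralGroup 3 × DihedralGroup 3 × DihedralGroup 3 //
  Wd t.1 t.2.1 = Wd t.2.2.1 t.2.2.2}

instance : Fintype Xt := by unfold Xt; infer_instance

set_option maxRecDepth 100000 in
set_option maxHeartbeats 1000000 in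
theorem card_Xt : 216 < Fintype.card Xt := by decide

theorem cond_of_Wd {w : FreeGroup (Fin 2)}
    (hw : w = FreeGroup.of 0 * FreeGroup.of 0 * FreeGroup.of 1 *
      (FreeGroup.of 0)⁻¹ * (FreeGroup.of 1)⁻¹) {a b c d : DihedralGroup 3}
    (h : Wd a b = Wd c d) :
    FreeGroup.lift ![a, b] w = FreeGroup.lift ![c, d] w := by
  rw [liftW hw, liftW hw]; exact h

theorem four_mem {w : FreeGroup (Fin 2)}
    (hw : w = FreeGroup.of 0 * FreeGroup.of 0 * FreeGroup.of 1 *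
      (FreeGroup.of 0)⁻¹ * (FreeGroup.of 1)⁻¹) :
    ∃ S : Finset (Gam w), S.card = 4 ∧ Subgroup.closure (S : Set (Gam w)) = ⊤ := by
  classical
  refine ⟨{A1 w, B1 w, A2 w, B2 w}, ?_, ?_⟩
  · -- distinctness via a homomorphism to the dihedral group
    have hc : Wd 1 (sr 0) = Wd (r 1) (sr 1) := by decide
    set φ := pairHom w 1 (sr 0) (r 1) (sr 1) (cond_of_Wd hw hc) with hφ
    have key : ∀ x y : Gam w, φ x ≠ φ y → x ≠ y := fun x y h hxy => h (by rw [hxy])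
    have h1 : A1 w ≠ B1 w := key _ _ (by simp only [hφ, pairHom_A1, pairHom_B1, pairHom_A2, pairHom_B2]; decide)
    have h2 : A1 w ≠ A2 w := key _ _ (by simp only [hφ, pairHom_A1, pairHom_B1, pairHom_A2, pairHom_B2]; decide)
    have h3 : A1 w ≠ B2 w := key _ _ (by simp only [hφ, pairHom_A1, pairHom_B1, pairHom_A2, pairHom_B2]; decide)
    have h4 : B1 w ≠ A2 w := key _ _ (by simp only [hφ, pairHom_A1, pairHom_B1, pairHom_A2, pairHom_B2]; decide)
    have h5 : B1 w ≠ B2 w := key _ _ (by simp only [hφ, pairHom_A1, pairHom_B1, pairHom_A2, pairHom_B2]; decide)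
    have h6 : A2 w ≠ B2 w := key _ _ (by simp only [hφ, pairHom_A1, pairHom_B1, pairHom_A2, pairHom_B2]; decide)
    rw [Finset.card_insert_of_notMem (by simp [h1, h2, h3]),
      Finset.card_insert_of_notMem (by simp [h4, h5]),
      Finset.card_insert_of_notMem (by simp [h6]), Finset.card_singleton]
  · have : (↑({A1 w, B1 w, A2 w, B2 w} : Finset (Gam w)) : Set (Gam w)) =
        {A1 w, B1 w, A2 w, B2 w} := by simp
    rw [this]
    exact closure_four w

theorem d_Gam {w : FreeGroup (Fin 2)}
    (hw : w = FreeGroup.of 0 * FreeGroup.of 0 * FreeGroup.of 1 *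
      (FreeGroup.of 0)⁻¹ * (FreeGroup.of 1)⁻¹) :
    d (Gam w) = 4 := by
  classical
  have hmem := four_mem hw
  refine le_antisymm (Nat.sInf_le hmem) (le_csInf ⟨4, hmem⟩ ?_)
  rintro n ⟨S, rfl, hcl⟩
  by_contra hlt
  push_neg at hlt
  have hn3 : S.card ≤ 3 := by omega
  set F : Xt → (Gam w →* DihedralGroup 3) := fun t =>
    pairHom w t.1.1 t.1.2.1 t.1.2.2.1 t.1.2.2.2 (cond_of_Wd hw t.2) with hF
  have hFinj : Function.Injective F := by
    rintro ⟨⟨a, b, c, d⟩, ht⟩ ⟨⟨a', b', c', d'⟩, ht'⟩ h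
    have e1 := congrArg (fun f => f (A1 w)) h
    have e2 := congrArg (fun f => f (B1 w)) h
    have e3 := congrArg (fun f => f (A2 w)) h
    have e4 := congrArg (fun f => f (B2 w)) h
    simp only [hF, pairHom_A1, pairHom_B1, pairHom_A2, pairHom_B2] at e1 e2 e3 e4
    exact Subtype.ext (by simp_all)
  have hcard := card_le_of_gen hcl F hFinj
  have hc6 : Fintype.card (DihedralGroup 3) = 6 := by decide
  rw [hc6] at hcard
  have hp : (6:ℕ) ^ S.card ≤ 6 ^ 3 := Nat.pow_le_pow_right (by norm_num) hn3
  have := card_Xt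
  omega

end DGam

section Abel
open Multiplicative

theorem commW {A : Type*} [CommGroup A] (x y : A) : x * x * y * x⁻¹ * y⁻¹ = x := by
  rw [mul_assoc (x * x), mul_comm y x⁻¹, ← mul_assoc (x * x), mul_assoc x x x⁻¹,
    mul_inv_cancel, mul_one, mul_assoc, mul_inv_cancel, mul_one]

variable {w : FreeGroup (Fin 2)}

theorem cond_eB (hw : w = FreeGroup.of 0 * FreeGroup.of 0 * FreeGroup.of 1 *
      (FreeGroup.of 0)⁻¹ * (FreeGroup.of 1)⁻¹) :
    FreeGroup.lift ![eB 0, eB 1] w = FreeGroup.lift ![eB 0, eB 2] w := by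
  rw [liftW hw, liftW hw, commW, commW]

noncomputable def phiBar (hw : w = FreeGroup.of 0 * FreeGroup.of 0 * FreeGroup.of 1 *
      (FreeGroup.of 0)⁻¹ * (FreeGroup.of 1)⁻¹) :
    Abelianization (Gam w) →* Multiplicative (Fin 3 → ℤ) :=
  Abelianization.lift (pairHom w (eB 0) (eB 1) (eB 0) (eB 2) (cond_eB hw))

noncomputable def Avec (w : FreeGroup (Fin 2)) : Fin 3 → Abelianization (Gam w) :=
  ![Abelianization.of (A1 w), Abelianization.of (B1 w), Abelianization.of (B2 w)]

noncomputable def psi (w : FreeGroup (Fin 2)) :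
    Multiplicative (Fin 3 → ℤ) →* Abelianization (Gam w) :=
  AddMonoidHom.toMultiplicativeLeft (∑ i : Fin 3,
    (zmultiplesHom _ (Additive.ofMul (Avec w i))).comp (Pi.evalAddMonoidHom (fun _ => ℤ) i))

theorem psi_eB (i : Fin 3) : psi w (eB i) = Avec w i := by
  fin_cases i <;>
    simp [psi, eB, AddMonoidHom.finset_sum_apply, Fin.sum_univ_three, Pi.single_apply]

theorem of_A2_eq (hw : w = FreeGroup.of 0 * FreeGroup.of 0 * FreeGroup.of 1 *
      (FreeGroup.of 0)⁻¹ * (FreeGroup.of 1)⁻¹) :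
    Abelianization.of (A2 w) = Abelianization.of (A1 w) := by
  set o := (Abelianization.of : Gam w →* Abelianization (Gam w))
  have h2 := AmalgamatedProduct.inl_comm (zpowersHom (FreeGroup (Fin 2)) w)
    (zpowersHom (FreeGroup (Fin 2)) w) (Multiplicative.ofAdd (1 : ℤ))
  simp only [zpowersHom_apply, toAdd_ofAdd, zpow_one] at h2
  have h3 : o (AmalgamatedProduct.inl (zpowersHom (FreeGroup (Fin 2)) w)
      (zpowersHom (FreeGroup (Fin 2)) w) w) = o (A1 w) := by
    have hc := congrArg (⇑(o.comp (AmalgamatedProduct.inl (zpowersHom (FreeGroup (Fin 2)) w)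
      (zpowersHom (FreeGroup (Fin 2)) w)))) hw
    simp only [MonoidHom.coe_comp, Function.comp_apply] at hc
    rw [hc]; simp only [map_mul, map_inv]; exact commW _ _
  have h4 : o (AmalgamatedProduct.inr (zpowersHom (FreeGroup (Fin 2)) w)
      (zpowersHom (FreeGroup (Fin 2)) w) w) = o (A2 w) := by
    have hc := congrArg (⇑(o.comp (AmalgamatedProduct.inr (zpowersHom (FreeGroup (Fin 2)) w)
      (zpowersHom (FreeGroup (Fin 2)) w)))) hw
    simp only [MonoidHom.coe_comp, Function.comp_apply] at hc
    rw [hc]; simp only [map_mul, map_inv]; exact commW _ _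
  rw [← h4, ← h2, h3]

theorem phiBar_psi (hw : w = FreeGroup.of 0 * FreeGroup.of 0 * FreeGroup.of 1 *
      (FreeGroup.of 0)⁻¹ * (FreeGroup.of 1)⁻¹) :
    (phiBar hw).comp (psi w) = MonoidHom.id _ := by
  apply MonoidHom.eq_of_eqOn_dense closure_eB
  rintro _ ⟨i, rfl⟩
  simp only [MonoidHom.coe_comp, Function.comp_apply, MonoidHom.id_apply, psi_eB]
  fin_cases i <;> simp [Avec, phiBar]

theorem psi_phiBar (hw : w = FreeGroup.of 0 * FreeGroup.of 0 * FreeGroup.of 1 *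
      (FreeGroup.of 0)⁻¹ * (FreeGroup.of 1)⁻¹) :
    (psi w).comp (phiBar hw) = MonoidHom.id _ := by
  apply Abelianization.hom_ext
  apply MonoidHom.eq_of_eqOn_dense (closure_four w)
  intro x hx
  rcases hx with rfl | rfl | rfl | rfl <;>
    simp only [MonoidHom.coe_comp, Function.comp_apply, MonoidHom.id_apply, phiBar,
      Abelianization.lift_apply_of, pairHom_A1, pairHom_B1, pairHom_A2, pairHom_B2, psi_eB, Avec,
      Matrix.cons_val_zero, Matrix.cons_val_one, Matrix.head_cons]
  · exact (of_A2_eq hw).symm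
  · rfl

noncomputable def abIso (hw : w = FreeGroup.of 0 * FreeGroup.of 0 * FreeGroup.of 1 *
      (FreeGroup.of 0)⁻¹ * (FreeGroup.of 1)⁻¹) :
    Abelianization (Gam w) ≃* Multiplicative (Fin 3 → ℤ) where
  toFun := phiBar hw
  invFun := psi w
  left_inv := fun x => DFunLike.congr_fun (psi_phiBar hw) x
  right_inv := fun x => DFunLike.congr_fun (phiBar_psi hw) x
  map_mul' := map_mul (phiBar hw)

end Abel

theorem double_of_F2_dab_three_d_four
    (w : FreeGroup (Fin 2))
    (hw : w = FreeGroup.of 0 * FreeGroup.of 0 * FreeGroup.of 1 *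
      (FreeGroup.of 0)⁻¹ * (FreeGroup.of 1)⁻¹) :
    Nonempty (Abelianization (AmalgamatedProduct
        (zpowersHom (FreeGroup (Fin 2)) w) (zpowersHom (FreeGroup (Fin 2)) w))
      ≃* Multiplicative (Fin 3 → ℤ)) ∧
    d (Abelianization (AmalgamatedProduct
        (zpowersHom (FreeGroup (Fin 2)) w) (zpowersHom (FreeGroup (Fin 2)) w))) = 3 ∧
    d (AmalgamatedProduct
        (zpowersHom (FreeGroup (Fin 2)) w) (zpowersHom (FreeGroup (Fin 2)) w)) = 4 := by
  refine ⟨⟨abIso hw⟩, ?_, d_Gam hw⟩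
  rw [d_congr (abIso hw), d_M3]
end
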